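/- arXiv:1705.10214 — 2 statements merged into one kernel-verified Lean document; each statement's English description precedes it below -/
import Mathlib

section
/- Let 𝒵 be an elliptic zeta function of weight k, and let Φ_Λ, Ψ_Λ be the uniquely determined quantities with 2πiΦ_Λ = η_Λ(ω₂)H_Λ(ω₁) − η_Λ(ω₁)H_Λ(ω₂) and 2πiΨ_Λ = ω₁H_Λ(ω₂) − ω₂H_Λ(ω₁). Suppose τ ↦ Ψ_{Λ_τ} is not identically zero, where Λ_τ = ℤ + τℤ. Then f(τ) = Φ_{Λ_τ}/Ψ_{Λ_τ} is a meromorphic function on ℍ satisfying f(γτ) = (cτ+d)² f(τ) for all γ = [[a,b],[c,d]] ∈ SL₂(ℤ) and τ ∈ ℍ; i.e., f is a weight 2 meromorphic modular form for SL₂(ℤ). -/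
open Complex

noncomputable section

/-- The lattice `ω₁ℤ + ω₂ℤ` as a subset of `ℂ`. -/
def latticeSet (ω₁ ω₂ : ℂ) : Set ℂ := {z : ℂ | ∃ m n : ℤ, z = (m : ℂ) * ω₁ + (n : ℂ) * ω₂}

/-- A subset of `ℂ` is a lattice if it is generated by a basis `(ω₁, ω₂)` with
`Im (ω₂/ω₁) > 0`. -/
def IsLattice (Λ : Set ℂ) : Prop := ∃ ω₁ ω₂ : ℂ, 0 < (ω₂ / ω₁).im ∧ Λ = latticeSet ω₁ ω₂

/-- The Weierstrass zeta function
`ζ(Λ, z) = 1/z + Σ_{ω ∈ Λ, ω ≠ 0} (1/(z-ω) + 1/ω + z/ω²)`. -/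
def wzeta (Λ : Set ℂ) (z : ℂ) : ℂ :=
  z⁻¹ + ∑' w : {w : ℂ // w ∈ Λ ∧ w ≠ 0}, ((z - w.1)⁻¹ + (w.1)⁻¹ + z / w.1 ^ 2)

/-- `η` is a quasi-period map for the Weierstrass zeta function of `Λ`:
`ζ(Λ, z+ω) = ζ(Λ, z) + η(ω)` for all `z ∈ ℂ` and `ω ∈ Λ`. -/
def IsQuasiPeriod (Λ : Set ℂ) (η : ℂ → ℂ) : Prop :=
  ∀ ω ∈ Λ, ∀ z : ℂ, wzeta Λ (z + ω) = wzeta Λ z + η ω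

/-- An elliptic zeta function of weight `k`, together with its quasi-period maps `H`:
(1) quasi-periodicity, (2) homogeneity of weight `k`, (3) the quasi-periods
`H_{Λ_τ}(τ)` and `H_{Λ_τ}(1)` are meromorphic in `τ` on the upper half-plane. -/
structure EllipticZeta (k : ℤ) where
  Z : Set ℂ → ℂ → ℂ
  H : Set ℂ → ℂ → ℂ
  quasi : ∀ Λ : Set ℂ, IsLattice Λ → ∀ ω ∈ Λ, ∀ z : ℂ, Z Λ (z + ω) = Z Λ z + H Λ ω
  homog : ∀ Λ : Set ℂ, IsLattice Λ → ∀ α : ℂ, α ≠ 0 → ∀ z : ℂ,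
    Z ((fun w => α * w) '' Λ) (α * z) = α ^ k * Z Λ z
  merom_tau : MeromorphicOn (fun τ : ℂ => H (latticeSet 1 τ) τ) {τ : ℂ | 0 < τ.im}
  merom_one : MeromorphicOn (fun τ : ℂ => H (latticeSet 1 τ) 1) {τ : ℂ | 0 < τ.im}

namespace EZaux

lemma mem_latticeSet (ω₁ ω₂ : ℂ) (m n : ℤ) : (m : ℂ) * ω₁ + (n : ℂ) * ω₂ ∈ latticeSet ω₁ ω₂ :=
  ⟨m, n, rfl⟩

lemma latticeSet_isLattice {τ : ℂ} (hτ : 0 < τ.im) : IsLattice (latticeSet 1 τ) :=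
  ⟨1, τ, by simpa using hτ, rfl⟩

lemma image_latticeSet (α ω₁ ω₂ : ℂ) :
    (fun w => α * w) '' latticeSet ω₁ ω₂ = latticeSet (α * ω₁) (α * ω₂) := by
  ext z
  constructor
  · rintro ⟨w, ⟨m, n, rfl⟩, rfl⟩
    exact ⟨m, n, by ring⟩
  · rintro ⟨m, n, rfl⟩
    exact ⟨(m : ℂ) * ω₁ + n * ω₂, ⟨m, n, rfl⟩, by ring⟩

lemma isLattice_image {α : ℂ} (hα : α ≠ 0) {τ : ℂ} (hτ : 0 < τ.im) :
    IsLattice ((fun w => α * w) '' latticeSet 1 τ) := by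
  refine ⟨α * 1, α * τ, ?_, by rw [image_latticeSet]⟩
  rw [mul_div_mul_left _ _ hα]
  simpa using hτ

/-- Linearity of period maps over the lattice. -/
lemma period_combo {ω₁ ω₂ : ℂ} {G P : ℂ → ℂ}
    (h : ∀ ω ∈ latticeSet ω₁ ω₂, ∀ z : ℂ, G (z + ω) = G z + P ω) (m n : ℤ) :
    P ((m : ℂ) * ω₁ + (n : ℂ) * ω₂) = m * P ω₁ + n * P ω₂ := by
  have hadd : ∀ x ∈ latticeSet ω₁ ω₂, ∀ y ∈ latticeSet ω₁ ω₂, P (x + y) = P x + P y := by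
    rintro x hx y hy
    have hxy : x + y ∈ latticeSet ω₁ ω₂ := by
      obtain ⟨mx, nx, rfl⟩ := hx
      obtain ⟨my, ny, rfl⟩ := hy
      exact ⟨mx + my, nx + ny, by push_cast; ring⟩
    have h1 := h _ hxy 0
    have h2 := h _ hx 0
    have h3 := h _ hy ((0 : ℂ) + x)
    rw [show (0 : ℂ) + (x + y) = ((0 : ℂ) + x) + y by ring] at h1
    rw [h3, h2] at h1
    linear_combination -h1
  have hQadd : ∀ p q : ℤ × ℤ,
      (fun p : ℤ × ℤ => P ((p.1 : ℂ) * ω₁ + (p.2 : ℂ) * ω₂)) (p + q)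
        = (fun p : ℤ × ℤ => P ((p.1 : ℂ) * ω₁ + (p.2 : ℂ) * ω₂)) p
          + (fun p : ℤ × ℤ => P ((p.1 : ℂ) * ω₁ + (p.2 : ℂ) * ω₂)) q := by
    intro p q
    simp only
    rw [show (((p + q).1 : ℂ) * ω₁ + ((p + q).2 : ℂ) * ω₂)
        = ((p.1 : ℂ) * ω₁ + (p.2 : ℂ) * ω₂) + ((q.1 : ℂ) * ω₁ + (q.2 : ℂ) * ω₂) by
        simp only [Prod.fst_add, Prod.snd_add]; push_cast; ring]
    exact hadd _ ⟨p.1, p.2, rfl⟩ _ ⟨q.1, q.2, rfl⟩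
  let Qh : ℤ × ℤ →+ ℂ := AddMonoidHom.mk' (fun p : ℤ × ℤ => P ((p.1 : ℂ) * ω₁ + (p.2 : ℂ) * ω₂)) hQadd
  have key : P ((m : ℂ) * ω₁ + (n : ℂ) * ω₂) = Qh (m, n) := rfl
  rw [key, show ((m, n) : ℤ × ℤ) = m • ((1, 0) : ℤ × ℤ) + n • ((0, 1) : ℤ × ℤ) by
    simp [Prod.ext_iff], map_add, map_zsmul, map_zsmul]
  have e1 : Qh (1, 0) = P ω₁ := by
    show P _ = _
    norm_num
  have e2 : Qh (0, 1) = P ω₂ := by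
    show P _ = _
    norm_num
  rw [e1, e2, zsmul_eq_mul, zsmul_eq_mul]

end EZaux

namespace EZaux

lemma wzeta_smul {α : ℂ} (hα : α ≠ 0) (Λ : Set ℂ) (z : ℂ) :
    wzeta ((fun w => α * w) '' Λ) (α * z) = α⁻¹ * wzeta Λ z := by
  unfold wzeta
  have hbij : Function.Bijective (fun w : {w : ℂ // w ∈ Λ ∧ w ≠ 0} =>
      (⟨α * w.1, ⟨⟨w.1, w.2.1, rfl⟩, mul_ne_zero hα w.2.2⟩⟩ :
        {w : ℂ // w ∈ (fun w => α * w) '' Λ ∧ w ≠ 0})) := by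
    constructor
    · intro x y hxy
      have := congrArg Subtype.val hxy
      simp only at this
      exact Subtype.ext (mul_left_cancel₀ hα this)
    · rintro ⟨w', ⟨⟨w, hw, rfl⟩, hne⟩⟩
      exact ⟨⟨w, hw, fun h0 => hne (by simp [h0])⟩, rfl⟩
  have hterm : ∀ w : {w : ℂ // w ∈ Λ ∧ w ≠ 0},
      ((α * z - α * w.1)⁻¹ + (α * w.1)⁻¹ + (α * z) / (α * w.1) ^ 2)
        = α⁻¹ * ((z - w.1)⁻¹ + (w.1)⁻¹ + z / w.1 ^ 2) := by
    intro w
    have h1 : (α * z - α * w.1)⁻¹ = α⁻¹ * (z - w.1)⁻¹ := by rw [← mul_sub, mul_inv]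
    have h2 : (α * w.1)⁻¹ = α⁻¹ * (w.1)⁻¹ := by rw [mul_inv]
    have h3 : (α * z) / (α * w.1) ^ 2 = α⁻¹ * (z / w.1 ^ 2) := by
      have hw := w.2.2
      field_simp
    rw [h1, h2, h3]
    ring
  have hsum : ∑' w : {w : ℂ // w ∈ (fun w => α * w) '' Λ ∧ w ≠ 0},
      ((α * z - w.1)⁻¹ + (w.1)⁻¹ + (α * z) / w.1 ^ 2)
      = ∑' w : {w : ℂ // w ∈ Λ ∧ w ≠ 0}, α⁻¹ * ((z - w.1)⁻¹ + (w.1)⁻¹ + z / w.1 ^ 2) := by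
    rw [← Equiv.tsum_eq (Equiv.ofBijective _ hbij)]
    exact tsum_congr (fun c => hterm c)
  rw [hsum, tsum_mul_left, mul_inv]
  ring

lemma eta_smul {τ τ' α : ℂ} (hα : α ≠ 0) {e e' : ℂ → ℂ}
    (he : IsQuasiPeriod (latticeSet 1 τ) e) (he' : IsQuasiPeriod (latticeSet 1 τ') e')
    (hL : latticeSet 1 τ' = (fun w => α * w) '' latticeSet 1 τ)
    {ω : ℂ} (hω : ω ∈ latticeSet 1 τ) : e' (α * ω) = α⁻¹ * e ω := by
  have hmem : α * ω ∈ latticeSet 1 τ' := by rw [hL]; exact ⟨ω, hω, rfl⟩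
  have hA : wzeta (latticeSet 1 τ') (α * (1 + ω)) = α⁻¹ * wzeta (latticeSet 1 τ) (1 + ω) := by
    rw [hL, wzeta_smul hα]
  have hB : wzeta (latticeSet 1 τ') α = α⁻¹ * wzeta (latticeSet 1 τ) 1 := by
    have : wzeta (latticeSet 1 τ') α = wzeta (latticeSet 1 τ') (α * 1) := by rw [mul_one]
    rw [this, hL, wzeta_smul hα]
  have h1 := he' (α * ω) hmem α
  rw [show α + α * ω = α * (1 + ω) by ring, hA, hB] at h1
  have h2 := he ω hω 1
  rw [h2] at h1
  linear_combination -h1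

lemma lin_ne_zero {m n : ℤ} (h : ¬(m = 0 ∧ n = 0)) {τ : ℂ} (hτ : 0 < τ.im) :
    (m : ℂ) + (n : ℂ) * τ ≠ 0 := by
  intro h0
  have him := congrArg Complex.im h0
  simp only [Complex.add_im, Complex.intCast_im, Complex.mul_im, Complex.intCast_re,
    Complex.zero_im, zero_add, zero_mul, add_zero] at him
  have hn : (n : ℝ) = 0 := by
    rcases mul_eq_zero.1 him with h' | h'
    · exact h'
    · exact absurd h' (ne_of_gt hτ)
  have hn' : n = 0 := by exact_mod_cast hn
  subst hn'
  simp only [Int.cast_zero, zero_mul, add_zero] at h0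
  have : m = 0 := by exact_mod_cast h0
  exact h ⟨this, rfl⟩

lemma v_ne_zero {a b c d : ℤ} (hdet : a * d - b * c = 1) {τ : ℂ} (hτ : 0 < τ.im) :
    (c : ℂ) * τ + (d : ℂ) ≠ 0 := by
  intro h0
  apply lin_ne_zero (m := d) (n := c) ?_ hτ
  · rw [← h0]; ring
  · rintro ⟨hd, hc⟩
    subst hd; subst hc
    simp at hdet

lemma tau'_im_pos {a b c d : ℤ} (hdet : a * d - b * c = 1) {τ : ℂ} (hτ : 0 < τ.im) :
    0 < (((a : ℂ) * τ + b) / ((c : ℂ) * τ + d)).im := by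
  have hv := v_ne_zero hdet hτ
  have hns : 0 < Complex.normSq ((c : ℂ) * τ + d) := Complex.normSq_pos.mpr hv
  have hdetR : (a : ℝ) * d - b * c = 1 := by exact_mod_cast hdet
  have h1 : ((a : ℂ) * τ + b).im = (a : ℝ) * τ.im := by
    simp [Complex.add_im, Complex.mul_im]
  have h2 : ((a : ℂ) * τ + b).re = (a : ℝ) * τ.re + b := by
    simp [Complex.add_re, Complex.mul_re]
  have h3 : ((c : ℂ) * τ + d).im = (c : ℝ) * τ.im := by
    simp [Complex.add_im, Complex.mul_im]
  have h4 : ((c : ℂ) * τ + d).re = (c : ℝ) * τ.re + d := by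
    simp [Complex.add_re, Complex.mul_re]
  rw [Complex.div_im, h1, h2, h3, h4, div_sub_div_same]
  have hnum : (a : ℝ) * τ.im * ((c : ℝ) * τ.re + d) - ((a : ℝ) * τ.re + b) * ((c : ℝ) * τ.im)
      = τ.im := by linear_combination τ.im * hdetR
  rw [hnum]
  positivity

lemma lattice_transform {a b c d : ℤ} (hdet : a * d - b * c = 1) {τ : ℂ} (hτ : 0 < τ.im) :
    latticeSet 1 (((a : ℂ) * τ + b) / ((c : ℂ) * τ + d))
      = (fun w => ((c : ℂ) * τ + d)⁻¹ * w) '' latticeSet 1 τ := by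
  have hv := v_ne_zero hdet hτ
  have hdetC : (a : ℂ) * d - b * c = 1 := by exact_mod_cast hdet
  ext z
  constructor
  · rintro ⟨m, n, rfl⟩
    refine ⟨((m * d + n * b : ℤ) : ℂ) * 1 + ((m * c + n * a : ℤ) : ℂ) * τ,
      ⟨m * d + n * b, m * c + n * a, rfl⟩, ?_⟩
    push_cast
    field_simp
    ring
  · rintro ⟨w, ⟨m, n, rfl⟩, rfl⟩
    refine ⟨a * m - b * n, -(c * m) + d * n, ?_⟩
    push_cast
    field_simp
    linear_combination (-((m : ℂ) + n * τ)) * hdetC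

end EZaux

namespace EZaux

lemma H_smul {k : ℤ} (Z : EllipticZeta k) {α : ℂ} (hα : α ≠ 0) {τ : ℂ} (hτ : 0 < τ.im)
    {ω : ℂ} (hω : ω ∈ latticeSet 1 τ) :
    Z.H ((fun w => α * w) '' latticeSet 1 τ) (α * ω) = α ^ k * Z.H (latticeSet 1 τ) ω := by
  have hL := latticeSet_isLattice hτ
  have hL' := isLattice_image hα hτ
  have hmem : α * ω ∈ (fun w => α * w) '' latticeSet 1 τ := ⟨ω, hω, rfl⟩
  have h1 := Z.quasi _ hL' (α * ω) hmem (α * 0)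
  rw [show α * 0 + α * ω = α * (0 + ω) by ring] at h1
  rw [Z.homog _ hL α hα (0 + ω), Z.homog _ hL α hα 0] at h1
  rw [Z.quasi _ hL ω hω 0] at h1
  linear_combination -h1

end EZaux

namespace EZaux

lemma one_le_norm_intvec {x : Fin 2 → ℤ} (hx : x ≠ 0) : (1 : ℝ) ≤ ‖x‖ := by
  rw [EisensteinSeries.norm_eq_max_natAbs]
  have h : x 0 ≠ 0 ∨ x 1 ≠ 0 := by
    by_contra hc
    push_neg at hc
    exact hx (funext fun i => by fin_cases i <;> simp [hc.1, hc.2])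
  have h2 : 1 ≤ max (x 0).natAbs (x 1).natAbs := by
    rcases h with h | h
    · exact le_trans (Nat.one_le_iff_ne_zero.mpr (Int.natAbs_ne_zero.mpr h)) (le_max_left _ _)
    · exact le_trans (Nat.one_le_iff_ne_zero.mpr (Int.natAbs_ne_zero.mpr h)) (le_max_right _ _)
  exact_mod_cast h2

lemma key_bound {A B : ℝ} (hB : 0 < B) {τ : ℂ} (hτS : 0 < τ.im) (hre : |τ.re| ≤ A)
    (him : B ≤ τ.im) {x : Fin 2 → ℤ} (hx : x ≠ 0) :
    EisensteinSeries.r ⟨⟨A, B⟩, hB⟩ * ‖x‖ ≤ ‖(x 1 : ℂ) + (x 0 : ℂ) * τ‖ := by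
  have h1 := EisensteinSeries.r_mul_max_le (⟨τ, hτS⟩ : UpperHalfPlane) hx
  have h2 := EisensteinSeries.r_lower_bound_on_verticalStrip (z := (⟨τ, hτS⟩ : UpperHalfPlane))
    hB ⟨hre, him⟩
  calc EisensteinSeries.r ⟨⟨A, B⟩, hB⟩ * ‖x‖
      ≤ EisensteinSeries.r ⟨τ, hτS⟩ * ‖x‖ := by
        exact mul_le_mul_of_nonneg_right h2 (norm_nonneg _)
    _ ≤ ‖(x 0 : ℂ) * ((⟨τ, hτS⟩ : UpperHalfPlane) : ℂ) + (x 1 : ℂ)‖ := h1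
    _ = ‖(x 1 : ℂ) + (x 0 : ℂ) * τ‖ := by
        rw [add_comm]

end EZaux

namespace EZaux

lemma pair_ne {x : Fin 2 → ℤ} (hx : x ≠ 0) : ¬(x 1 = 0 ∧ x 0 = 0) := by
  rintro ⟨h1, h0⟩
  exact hx (funext fun i => by fin_cases i <;> simp [h0, h1])

lemma wzeta_reindex {τ : ℂ} (hτ : 0 < τ.im) (z : ℂ) :
    wzeta (latticeSet 1 τ) z = z⁻¹ + ∑' x : {x : Fin 2 → ℤ // x ≠ 0},
      ((z - ((x.1 1 : ℂ) + (x.1 0 : ℂ) * τ))⁻¹ + ((x.1 1 : ℂ) + (x.1 0 : ℂ) * τ)⁻¹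
        + z / ((x.1 1 : ℂ) + (x.1 0 : ℂ) * τ) ^ 2) := by
  unfold wzeta
  congr 1
  have hbij : Function.Bijective (fun x : {x : Fin 2 → ℤ // x ≠ 0} =>
      (⟨(x.1 1 : ℂ) + (x.1 0 : ℂ) * τ, ⟨⟨x.1 1, x.1 0, by ring⟩,
        lin_ne_zero (pair_ne x.2) hτ⟩⟩ : {w : ℂ // w ∈ latticeSet 1 τ ∧ w ≠ 0})) := by
    constructor
    · intro x y hxy
      have hval := congrArg Subtype.val hxy
      simp only at hval
      have hdiff : ((x.1 1 - y.1 1 : ℤ) : ℂ) + ((x.1 0 - y.1 0 : ℤ) : ℂ) * τ = 0 := by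
        push_cast
        linear_combination hval
      by_cases hz : x.1 1 - y.1 1 = 0 ∧ x.1 0 - y.1 0 = 0
      · refine Subtype.ext (funext fun i => ?_)
        fin_cases i
        · simpa using sub_eq_zero.mp hz.2
        · simpa using sub_eq_zero.mp hz.1
      · exact absurd hdiff (lin_ne_zero hz hτ)
    · rintro ⟨w, ⟨⟨m, n, rfl⟩, hw0⟩⟩
      have hne : ![n, m] ≠ 0 := by
        intro h0
        have hn : n = 0 := by simpa using congrFun h0 0
        have hm : m = 0 := by simpa using congrFun h0 1
        apply hw0
        simp [hn, hm]
      refine ⟨⟨![n, m], hne⟩, Subtype.ext ?_⟩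
      show ((![n, m] 1 : ℤ) : ℂ) + ((![n, m] 0 : ℤ) : ℂ) * τ = (m : ℂ) * 1 + (n : ℂ) * τ
      simp only [Matrix.cons_val_one, Matrix.head_cons, Matrix.cons_val_zero]
      ring
  rw [← Equiv.tsum_eq (Equiv.ofBijective _ hbij)]
  exact tsum_congr fun x => rfl

end EZaux

namespace EZaux

set_option maxHeartbeats 1000000 in
lemma wzeta_lin_diffOn (p q : ℤ) (hpq : ¬(p = 0 ∧ q = 0)) :
    DifferentiableOn ℂ (fun τ : ℂ => wzeta (latticeSet 1 τ) ((p : ℂ) + (q : ℂ) * τ))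
      {τ : ℂ | 0 < τ.im} := by
  set F : {x : Fin 2 → ℤ // x ≠ 0} → ℂ → ℂ := fun x τ =>
    (((p : ℂ) + (q : ℂ) * τ) - ((x.1 1 : ℂ) + (x.1 0 : ℂ) * τ))⁻¹
      + ((x.1 1 : ℂ) + (x.1 0 : ℂ) * τ)⁻¹
      + ((p : ℂ) + (q : ℂ) * τ) / ((x.1 1 : ℂ) + (x.1 0 : ℂ) * τ) ^ 2 with hFdef
  have hzdiff : Differentiable ℂ (fun τ : ℂ => (p : ℂ) + (q : ℂ) * τ) :=
    (differentiable_const _).add ((differentiable_const _).mul differentiable_id)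
  have hFdiff : ∀ x, DifferentiableOn ℂ (F x) {τ : ℂ | 0 < τ.im} := by
    intro x
    have hx1 : ¬(x.1 1 = 0 ∧ x.1 0 = 0) := pair_ne x.2
    have hwdiff : DifferentiableOn ℂ (fun τ : ℂ => (x.1 1 : ℂ) + (x.1 0 : ℂ) * τ)
        {τ : ℂ | 0 < τ.im} :=
      ((differentiable_const _).add ((differentiable_const _).mul differentiable_id)).differentiableOn
    have hwne : ∀ τ ∈ {τ : ℂ | 0 < τ.im}, (x.1 1 : ℂ) + (x.1 0 : ℂ) * τ ≠ 0 :=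
      fun τ hτ => lin_ne_zero hx1 hτ
    apply DifferentiableOn.add
    apply DifferentiableOn.add
    · by_cases hsp : p - x.1 1 = 0 ∧ q - x.1 0 = 0
      · have hzero : ∀ τ : ℂ,
            ((p : ℂ) + (q : ℂ) * τ) - ((x.1 1 : ℂ) + (x.1 0 : ℂ) * τ) = 0 := by
          intro τ
          have e1 : x.1 1 = p := by omega
          have e2 : x.1 0 = q := by omega
          rw [e1, e2]; ring
        exact (differentiableOn_const ((0 : ℂ)⁻¹)).congr fun τ _ => by rw [hzero τ]
      · apply DifferentiableOn.inv
        · exact (hzdiff.differentiableOn).sub hwdiff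
        · intro τ hτ
          have e : ((p : ℂ) + (q : ℂ) * τ) - ((x.1 1 : ℂ) + (x.1 0 : ℂ) * τ)
              = ((p - x.1 1 : ℤ) : ℂ) + ((q - x.1 0 : ℤ) : ℂ) * τ := by push_cast; ring
          rw [e]; exact lin_ne_zero hsp hτ
    · exact hwdiff.inv hwne
    · exact (hzdiff.differentiableOn).div (hwdiff.pow 2)
        (fun τ hτ => pow_ne_zero 2 (hwne τ hτ))
  have key : DifferentiableOn ℂ (fun τ : ℂ => ∑' x, F x τ) {τ : ℂ | 0 < τ.im} := by
    intro τ₀ hτ₀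
    have hτ₀im : 0 < τ₀.im := hτ₀
    set ρ : ℝ := τ₀.im / 2 with hρdef
    have hρ : 0 < ρ := half_pos hτ₀im
    set A : ℝ := |τ₀.re| + ρ with hAdef
    have hK : ∀ τ ∈ Metric.closedBall τ₀ ρ, |τ.re| ≤ A ∧ ρ ≤ τ.im ∧ 0 < τ.im := by
      intro τ hτ
      rw [Metric.mem_closedBall, Complex.dist_eq] at hτ
      have hre : |τ.re - τ₀.re| ≤ ρ := by
        have := Complex.abs_re_le_norm (τ - τ₀)
        simp only [Complex.sub_re] at this
        linarith
      have him : |τ.im - τ₀.im| ≤ ρ := by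
        have := Complex.abs_im_le_norm (τ - τ₀)
        simp only [Complex.sub_im] at this
        linarith
      have h1 := abs_le.mp hre
      have h2 := abs_le.mp him
      have h3 := abs_sub_abs_le_abs_sub τ.re τ₀.re
      refine ⟨by rw [hAdef]; linarith, by rw [hρdef] at *; linarith, by linarith⟩
    set δ : ℝ := EisensteinSeries.r ⟨⟨A, ρ⟩, hρ⟩ with hδdef
    have hδ : 0 < δ := EisensteinSeries.r_pos _
    set M : ℝ := |(p : ℝ)| + |(q : ℝ)| * (‖τ₀‖ + ρ) + 1 with hMdef
    have hM : 1 ≤ M := le_add_of_nonneg_left (by positivity)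
    have hzb : ∀ τ ∈ Metric.closedBall τ₀ ρ, ‖(p : ℂ) + (q : ℂ) * τ‖ ≤ M := by
      intro τ hτ
      rw [Metric.mem_closedBall, Complex.dist_eq] at hτ
      have habs : ‖τ‖ ≤ ‖τ₀‖ + ρ := by
        have := norm_sub_norm_le τ τ₀
        linarith
      calc ‖(p : ℂ) + (q : ℂ) * τ‖
          ≤ ‖(p : ℂ)‖ + ‖(q : ℂ) * τ‖ := norm_add_le _ _
        _ = |(p : ℝ)| + |(q : ℝ)| * ‖τ‖ := by
            rw [norm_mul, Complex.norm_intCast, Complex.norm_intCast]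
        _ ≤ |(p : ℝ)| + |(q : ℝ)| * (‖τ₀‖ + ρ) := by
            have := abs_nonneg (q : ℝ)
            nlinarith
        _ ≤ M := by rw [hMdef]; linarith
    have hwb : ∀ τ ∈ Metric.closedBall τ₀ ρ, ∀ x : {x : Fin 2 → ℤ // x ≠ 0},
        δ * ‖x.1‖ ≤ ‖(x.1 1 : ℂ) + (x.1 0 : ℂ) * τ‖ := by
      intro τ hτ x
      obtain ⟨h1, h2, h3⟩ := hK τ hτ
      exact key_bound hρ h3 h1 h2 x.2
    set C : ℝ := 2 * M ^ 3 / δ ^ 4 + 2 * M ^ 2 / δ ^ 3 with hCdef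
    set u : {x : Fin 2 → ℤ // x ≠ 0} → ℝ := fun x => C / ‖x.1‖ ^ 3 with hudef
    have hu : Summable u := by
      have h3 := EisensteinSeries.summable_one_div_norm_rpow (k := 3) (by norm_num)
      have h4 : Summable (fun v : Fin 2 → ℤ => C / ‖v‖ ^ 3) := by
        refine (h3.mul_left C).congr fun v => ?_
        rw [Real.rpow_neg (norm_nonneg _), show ((3 : ℝ)) = ((3 : ℕ) : ℝ) by norm_num,
          Real.rpow_natCast, div_eq_mul_inv]
      exact h4.subtype _
    -- the core bound
    have hcore : ∀ x : {x : Fin 2 → ℤ // x ≠ 0}, x.1 ≠ ![q, p] →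
        ∀ τ ∈ Metric.ball τ₀ ρ, ‖F x τ‖ ≤ u x := by
      intro x hxne τ hτO
      have hτK : τ ∈ Metric.closedBall τ₀ ρ := Metric.ball_subset_closedBall hτO
      obtain ⟨hre, him, himpos⟩ := hK τ hτK
      set z : ℂ := (p : ℂ) + (q : ℂ) * τ with hzdef
      set w : ℂ := (x.1 1 : ℂ) + (x.1 0 : ℂ) * τ with hwdef
      have hx0 : (0 : ℝ) < ‖x.1‖ := lt_of_lt_of_le zero_lt_one (one_le_norm_intvec x.2)
      have hn1 : (1 : ℝ) ≤ ‖x.1‖ := one_le_norm_intvec x.2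
      have hy : ¬(p - x.1 1 = 0 ∧ q - x.1 0 = 0) := by
        rintro ⟨h1, h2⟩
        apply hxne
        funext i
        fin_cases i <;> simp <;> omega
      have hwne : w ≠ 0 := lin_ne_zero (pair_ne x.2) himpos
      have hzwe : z - w = ((p - x.1 1 : ℤ) : ℂ) + ((q - x.1 0 : ℤ) : ℂ) * τ := by
        rw [hzdef, hwdef]; push_cast; ring
      have hzwne : z - w ≠ 0 := by rw [hzwe]; exact lin_ne_zero hy himpos
      have hFeq : F x τ = z ^ 2 / (w ^ 2 * (z - w)) := by
        show (z - w)⁻¹ + w⁻¹ + z / w ^ 2 = _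
        field_simp
        ring
      have hz_le : ‖z‖ ≤ M := hzb τ hτK
      have hw_ge : δ * ‖x.1‖ ≤ ‖w‖ := hwb τ hτK x
      have hzw1 : δ ≤ ‖z - w‖ := by
        rw [hzwe]
        have hyvec : ![q - x.1 0, p - x.1 1] ≠ 0 := by
          intro h0
          refine hy ⟨?_, ?_⟩
          · simpa using congrFun h0 1
          · simpa using congrFun h0 0
        have hb := key_bound hρ himpos hre him hyvec
        simp only [Matrix.cons_val_one, Matrix.head_cons, Matrix.cons_val_zero] at hb
        have h1 : (1 : ℝ) ≤ ‖![q - x.1 0, p - x.1 1]‖ := one_le_norm_intvec hyvec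
        calc δ = δ * 1 := (mul_one δ).symm
          _ ≤ δ * ‖![q - x.1 0, p - x.1 1]‖ := by
              exact mul_le_mul_of_nonneg_left h1 hδ.le
          _ ≤ _ := hb
      have hzw2 : ‖w‖ - M ≤ ‖z - w‖ := by
        have h5 : ‖w‖ ≤ ‖z‖ + ‖z - w‖ := by
          have h6 := norm_sub_le z (z - w)
          rw [show z - (z - w) = w by ring] at h6
          exact h6
        linarith
      have hawpos : 0 < ‖w‖ := norm_pos_iff.mpr hwne
      have hazwpos : 0 < ‖z - w‖ := norm_pos_iff.mpr hzwne
      have hnorm : ‖F x τ‖ = ‖z‖ ^ 2 / (‖w‖ ^ 2 * ‖z - w‖) := by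
        rw [hFeq, norm_div, norm_mul, norm_pow, norm_pow]
      rw [hnorm, hudef]
      have hd1 : (0 : ℝ) < (δ * ‖x.1‖) ^ 2 * δ := mul_pos (pow_pos (mul_pos hδ hx0) 2) hδ
      have hw2 : (δ * ‖x.1‖) ^ 2 ≤ ‖w‖ ^ 2 :=
        pow_le_pow_left₀ (by positivity) hw_ge 2
      rcases le_or_gt (δ * ‖x.1‖) (2 * M) with hsmall | hlarge
      · calc ‖z‖ ^ 2 / (‖w‖ ^ 2 * ‖z - w‖)
            ≤ M ^ 2 / ((δ * ‖x.1‖) ^ 2 * δ) :=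
              div_le_div₀ (by positivity) (pow_le_pow_left₀ (norm_nonneg _) hz_le 2)
                hd1 (mul_le_mul hw2 hzw1 hδ.le (by positivity))
          _ ≤ C / ‖x.1‖ ^ 3 := by
              rw [div_le_div_iff₀ hd1 (pow_pos hx0 3)]
              have hC1 : C * ((δ * ‖x.1‖) ^ 2 * δ)
                  = 2 * M ^ 3 * ‖x.1‖ ^ 2 / δ + 2 * M ^ 2 * ‖x.1‖ ^ 2 := by
                rw [hCdef]; field_simp
              rw [hC1]
              have hs2 : M ^ 2 * ‖x.1‖ ^ 3 ≤ 2 * M ^ 3 * ‖x.1‖ ^ 2 / δ := by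
                rw [le_div_iff₀ hδ]
                have hmm := mul_le_mul_of_nonneg_left hsmall
                  (by positivity : (0 : ℝ) ≤ M ^ 2 * ‖x.1‖ ^ 2)
                calc M ^ 2 * ‖x.1‖ ^ 3 * δ = M ^ 2 * ‖x.1‖ ^ 2 * (δ * ‖x.1‖) := by ring
                  _ ≤ M ^ 2 * ‖x.1‖ ^ 2 * (2 * M) := hmm
                  _ = 2 * M ^ 3 * ‖x.1‖ ^ 2 := by ring
              have hpos2 : (0 : ℝ) ≤ 2 * M ^ 2 * ‖x.1‖ ^ 2 := by positivity
              exact hs2.trans (le_add_of_nonneg_right hpos2)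
      · have l1 : δ * ‖x.1‖ / 2 ≤ ‖z - w‖ := by linarith
        calc ‖z‖ ^ 2 / (‖w‖ ^ 2 * ‖z - w‖)
            ≤ M ^ 2 / ((δ * ‖x.1‖) ^ 2 * (δ * ‖x.1‖ / 2)) :=
              div_le_div₀ (by positivity) (pow_le_pow_left₀ (norm_nonneg _) hz_le 2)
                (by positivity) (mul_le_mul hw2 l1 (by positivity) (by positivity))
          _ = (2 * M ^ 2 / δ ^ 3) / ‖x.1‖ ^ 3 := by
              field_simp
          _ ≤ C / ‖x.1‖ ^ 3 := by
              rw [div_le_div_iff_of_pos_right (pow_pos hx0 3), hCdef]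
              have : (0 : ℝ) ≤ 2 * M ^ 3 / δ ^ 4 := by positivity
              linarith
    have hbound : ∀ᶠ x in Filter.cofinite, ∀ τ ∈ Metric.ball τ₀ ρ, ‖F x τ‖ ≤ u x := by
      refine Filter.eventually_cofinite.mpr (Set.Finite.subset
        (Set.finite_singleton (⟨![q, p], fun h0 => hpq ⟨by simpa using congrFun h0 1,
          by simpa using congrFun h0 0⟩⟩ : {x : Fin 2 → ℤ // x ≠ 0})) ?_)
      intro x hx
      by_contra hne
      apply hx
      apply hcore
      intro hval
      exact hne (by rwa [Set.mem_singleton_iff, Subtype.ext_iff])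
    have htu := tendstoUniformlyOn_tsum_of_cofinite_eventually hu hbound
    have hdiff := (htu.tendstoLocallyUniformlyOn).differentiableOn
      (Filter.Eventually.of_forall fun s => DifferentiableOn.fun_sum fun i _ =>
        (hFdiff i).mono (fun τ hτ =>
          (hK τ (Metric.ball_subset_closedBall hτ)).2.2))
      Metric.isOpen_ball
    exact ((hdiff.differentiableAt
      (Metric.isOpen_ball.mem_nhds (Metric.mem_ball_self hρ))).differentiableWithinAt)
  have hZ : DifferentiableOn ℂ (fun τ : ℂ => ((p : ℂ) + (q : ℂ) * τ)⁻¹)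
      {τ : ℂ | 0 < τ.im} :=
    DifferentiableOn.inv hzdiff.differentiableOn (fun τ hτ => lin_ne_zero hpq hτ)
  exact (hZ.add key).congr fun τ hτ => by rw [wzeta_reindex hτ]; rfl

end EZaux

set_option maxHeartbeats 1000000 in
/-- if `τ ↦ Ψ_{Λ_τ}` is not identically zero, then
`f(τ) = Φ_{Λ_τ}/Ψ_{Λ_τ}` is a weight 2 meromorphic modular form for `SL₂(ℤ)`. -/
theorem ellipticZeta_to_modularForm (k : ℤ) (Z : EllipticZeta k)
    (η : ℂ → ℂ → ℂ) (hη : ∀ τ : ℂ, 0 < τ.im → IsQuasiPeriod (latticeSet 1 τ) (η τ))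
    (Φ Ψ : ℂ → ℂ)
    (hΦ : ∀ τ : ℂ, 0 < τ.im → 2 * (Real.pi : ℂ) * Complex.I * Φ τ
        = η τ τ * Z.H (latticeSet 1 τ) 1 - η τ 1 * Z.H (latticeSet 1 τ) τ)
    (hΨ : ∀ τ : ℂ, 0 < τ.im → 2 * (Real.pi : ℂ) * Complex.I * Ψ τ
        = Z.H (latticeSet 1 τ) τ - τ * Z.H (latticeSet 1 τ) 1)
    (hne : ∃ τ : ℂ, 0 < τ.im ∧ Ψ τ ≠ 0)
    (f : ℂ → ℂ) (hf : ∀ τ : ℂ, 0 < τ.im → f τ = Φ τ / Ψ τ) :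
    MeromorphicOn f {τ : ℂ | 0 < τ.im} ∧
    ∀ a b c d : ℤ, a * d - b * c = 1 → ∀ τ : ℂ, 0 < τ.im →
      f (((a : ℂ) * τ + b) / ((c : ℂ) * τ + d)) = ((c : ℂ) * τ + d) ^ 2 * f τ := by
  have hSopen : IsOpen {τ : ℂ | 0 < τ.im} := isOpen_lt continuous_const Complex.continuous_im
  have h2πi : (2 * (Real.pi : ℂ) * Complex.I) ≠ 0 := by
    simp [Real.pi_ne_zero, Complex.I_ne_zero, Complex.ofReal_ne_zero]
  constructor
  · -- meromorphy
    have hmero_of_diff : ∀ {g : ℂ → ℂ}, DifferentiableOn ℂ g {τ : ℂ | 0 < τ.im} →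
        MeromorphicOn g {τ : ℂ | 0 < τ.im} := fun hg x hx =>
      ((hg.analyticAt (hSopen.mem_nhds hx)).meromorphicAt)
    have hη1 : ∀ τ : ℂ, 0 < τ.im → η τ 1
        = wzeta (latticeSet 1 τ) (((2 : ℤ) : ℂ) + ((0 : ℤ) : ℂ) * τ)
          - wzeta (latticeSet 1 τ) (((1 : ℤ) : ℂ) + ((0 : ℤ) : ℂ) * τ) := by
      intro τ hτ
      have hmem : (1 : ℂ) ∈ latticeSet 1 τ := ⟨1, 0, by norm_num⟩
      have h1 := hη τ hτ 1 hmem 1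
      rw [show ((2 : ℤ) : ℂ) + ((0 : ℤ) : ℂ) * τ = (1 : ℂ) + 1 by norm_num,
        show ((1 : ℤ) : ℂ) + ((0 : ℤ) : ℂ) * τ = (1 : ℂ) by norm_num, h1]
      ring
    have hητ : ∀ τ : ℂ, 0 < τ.im → η τ τ
        = wzeta (latticeSet 1 τ) (((1 : ℤ) : ℂ) + ((1 : ℤ) : ℂ) * τ)
          - wzeta (latticeSet 1 τ) (((1 : ℤ) : ℂ) + ((0 : ℤ) : ℂ) * τ) := by
      intro τ hτ
      have hmem : τ ∈ latticeSet 1 τ := ⟨0, 1, by norm_num⟩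
      have h1 := hη τ hτ τ hmem 1
      rw [show ((1 : ℤ) : ℂ) + ((1 : ℤ) : ℂ) * τ = (1 : ℂ) + τ by norm_num,
        show ((1 : ℤ) : ℂ) + ((0 : ℤ) : ℂ) * τ = (1 : ℂ) by norm_num, h1]
      ring
    have hw10 := hmero_of_diff (EZaux.wzeta_lin_diffOn 1 0 (by norm_num))
    have hw20 := hmero_of_diff (EZaux.wzeta_lin_diffOn 2 0 (by norm_num))
    have hw11 := hmero_of_diff (EZaux.wzeta_lin_diffOn 1 1 (by norm_num))
    have hη1mero : MeromorphicOn (fun τ : ℂ => η τ 1) {τ : ℂ | 0 < τ.im} := by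
      refine MeromorphicOn.congr (fun x hx => (hw20 x hx).sub (hw10 x hx)) ?_ hSopen
      intro τ hτ
      exact (hη1 τ hτ).symm
    have hητmero : MeromorphicOn (fun τ : ℂ => η τ τ) {τ : ℂ | 0 < τ.im} := by
      refine MeromorphicOn.congr (fun x hx => (hw11 x hx).sub (hw10 x hx)) ?_ hSopen
      intro τ hτ
      exact (hητ τ hτ).symm
    have hΦmero : MeromorphicOn Φ {τ : ℂ | 0 < τ.im} := by
      have hform : MeromorphicOn (fun τ : ℂ =>
          (η τ τ * Z.H (latticeSet 1 τ) 1 - η τ 1 * Z.H (latticeSet 1 τ) τ)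
            / (2 * (Real.pi : ℂ) * Complex.I)) {τ : ℂ | 0 < τ.im} := fun x hx =>
        (((hητmero x hx).mul (Z.merom_one x hx)).sub
          ((hη1mero x hx).mul (Z.merom_tau x hx))).div (MeromorphicAt.const _ x)
      refine hform.congr (fun τ hτ => ?_) hSopen
      rw [eq_comm, eq_div_iff h2πi]
      linear_combination hΦ τ hτ
    have hΨmero : MeromorphicOn Ψ {τ : ℂ | 0 < τ.im} := by
      have hform : MeromorphicOn (fun τ : ℂ =>
          (Z.H (latticeSet 1 τ) τ - τ * Z.H (latticeSet 1 τ) 1)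
            / (2 * (Real.pi : ℂ) * Complex.I)) {τ : ℂ | 0 < τ.im} := fun x hx =>
        ((Z.merom_tau x hx).sub ((MeromorphicAt.id x).mul (Z.merom_one x hx))).div
          (MeromorphicAt.const _ x)
      refine hform.congr (fun τ hτ => ?_) hSopen
      rw [eq_comm, eq_div_iff h2πi]
      linear_combination hΨ τ hτ
    refine (hΦmero.div hΨmero).congr (fun τ hτ => ?_) hSopen
    exact (hf τ hτ).symm
  · -- transformation law
    intro a b c d hdet τ hτ
    have hv : (c : ℂ) * τ + (d : ℂ) ≠ 0 := EZaux.v_ne_zero hdet hτ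
    set v : ℂ := (c : ℂ) * τ + (d : ℂ) with hvdef
    set α : ℂ := v⁻¹ with hαdef
    have hα : α ≠ 0 := inv_ne_zero hv
    have hτ'pos : 0 < (((a : ℂ) * τ + b) / v).im := EZaux.tau'_im_pos hdet hτ
    set τ' : ℂ := ((a : ℂ) * τ + b) / v with hτ'def
    have hL : latticeSet 1 τ' = (fun w => α * w) '' latticeSet 1 τ :=
      EZaux.lattice_transform hdet hτ
    have hmemA : (b : ℂ) * 1 + (a : ℂ) * τ ∈ latticeSet 1 τ := ⟨b, a, rfl⟩
    have hmemV : (d : ℂ) * 1 + (c : ℂ) * τ ∈ latticeSet 1 τ := ⟨d, c, rfl⟩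
    have hHcombo : ∀ m n : ℤ, Z.H (latticeSet 1 τ) ((m : ℂ) * 1 + (n : ℂ) * τ)
        = (m : ℂ) * Z.H (latticeSet 1 τ) 1 + (n : ℂ) * Z.H (latticeSet 1 τ) τ := by
      intro m n
      exact EZaux.period_combo (G := Z.Z (latticeSet 1 τ)) (P := Z.H (latticeSet 1 τ))
        (Z.quasi _ (EZaux.latticeSet_isLattice hτ)) m n
    have hηcombo : ∀ m n : ℤ, η τ ((m : ℂ) * 1 + (n : ℂ) * τ)
        = (m : ℂ) * η τ 1 + (n : ℂ) * η τ τ := by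
      intro m n
      exact EZaux.period_combo (G := wzeta (latticeSet 1 τ)) (P := η τ) (hη τ hτ) m n
    have e1 : α * ((d : ℂ) * 1 + (c : ℂ) * τ) = 1 := by
      rw [hαdef]
      rw [show (d : ℂ) * 1 + (c : ℂ) * τ = v from by rw [hvdef]; ring]
      exact inv_mul_cancel₀ hv
    have e2 : α * ((b : ℂ) * 1 + (a : ℂ) * τ) = τ' := by
      rw [hαdef, hτ'def, div_eq_inv_mul]
      ring
    have hH'A : Z.H (latticeSet 1 τ') τ'
        = α ^ k * ((b : ℂ) * Z.H (latticeSet 1 τ) 1 + (a : ℂ) * Z.H (latticeSet 1 τ) τ) := by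
      have h2eq : Z.H (latticeSet 1 τ') τ'
          = Z.H (latticeSet 1 τ') (α * ((b : ℂ) * 1 + (a : ℂ) * τ)) := by rw [e2]
      rw [h2eq, hL, EZaux.H_smul Z hα hτ hmemA, hHcombo b a]
    have hH'1 : Z.H (latticeSet 1 τ') 1
        = α ^ k * ((d : ℂ) * Z.H (latticeSet 1 τ) 1 + (c : ℂ) * Z.H (latticeSet 1 τ) τ) := by
      have h1eq : Z.H (latticeSet 1 τ') 1
          = Z.H (latticeSet 1 τ') (α * ((d : ℂ) * 1 + (c : ℂ) * τ)) := by rw [e1]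
      rw [h1eq, hL, EZaux.H_smul Z hα hτ hmemV, hHcombo d c]
    have hη'A : η τ' τ' = α⁻¹ * ((b : ℂ) * η τ 1 + (a : ℂ) * η τ τ) := by
      have h3 := EZaux.eta_smul hα (hη τ hτ) (hη τ' hτ'pos) hL hmemA
      rw [e2] at h3
      rw [h3, hηcombo b a]
    have hη'1 : η τ' 1 = α⁻¹ * ((d : ℂ) * η τ 1 + (c : ℂ) * η τ τ) := by
      have h3 := EZaux.eta_smul hα (hη τ hτ) (hη τ' hτ'pos) hL hmemV
      rw [e1] at h3
      rw [h3, hηcombo d c]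
    have hαv : α * v = 1 := inv_mul_cancel₀ hv
    have hdetC : (a : ℂ) * d - (b : ℂ) * c = 1 := by exact_mod_cast hdet
    have hτ'eq : τ' = α * ((a : ℂ) * τ + b) := by
      rw [hτ'def, hαdef, div_eq_inv_mul]
    have hΨtrans : Ψ τ' = α ^ (k + 1) * Ψ τ := by
      apply mul_left_cancel₀ h2πi
      have hstep : 2 * (Real.pi : ℂ) * Complex.I * Ψ τ'
          = α ^ (k + 1) * (2 * (Real.pi : ℂ) * Complex.I * Ψ τ) := by
        rw [hΨ τ' hτ'pos, hΨ τ hτ, hH'A, hH'1, zpow_add_one₀ hα]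
        rw [show τ' * (α ^ k * ((d : ℂ) * Z.H (latticeSet 1 τ) 1
            + (c : ℂ) * Z.H (latticeSet 1 τ) τ))
          = (α * ((a : ℂ) * τ + b)) * (α ^ k * ((d : ℂ) * Z.H (latticeSet 1 τ) 1
            + (c : ℂ) * Z.H (latticeSet 1 τ) τ)) from by rw [← hτ'eq]]
        linear_combination (α ^ k * α * (Z.H (latticeSet 1 τ) τ - τ * Z.H (latticeSet 1 τ) 1)) * hdetC
          - (α ^ k * ((b : ℂ) * Z.H (latticeSet 1 τ) 1 + (a : ℂ) * Z.H (latticeSet 1 τ) τ)) * hαv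
      rw [hstep]
      ring
    have hΦtrans : Φ τ' = α ^ (k - 1) * Φ τ := by
      apply mul_left_cancel₀ h2πi
      have hstep : 2 * (Real.pi : ℂ) * Complex.I * Φ τ'
          = α ^ (k - 1) * (2 * (Real.pi : ℂ) * Complex.I * Φ τ) := by
        rw [hΦ τ' hτ'pos, hΦ τ hτ, hη'A, hη'1, hH'A, hH'1, zpow_sub_one₀ hα]
        linear_combination (α ^ k * α⁻¹
          * (η τ τ * Z.H (latticeSet 1 τ) 1 - η τ 1 * Z.H (latticeSet 1 τ) τ)) * hdetC
      rw [hstep]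
      ring
    rw [hf τ' hτ'pos, hf τ hτ, hΦtrans, hΨtrans]
    have hsplit : α ^ (k + 1) = α ^ (k - 1) * α ^ (2 : ℕ) := by
      rw [← zpow_natCast α 2, ← zpow_add₀ hα]
      congr 1
      omega
    rw [hsplit, mul_assoc, mul_div_mul_left _ _ (zpow_ne_zero _ hα)]
    have hα2 : α ^ (2 : ℕ) = (v ^ 2)⁻¹ := by rw [hαdef, inv_pow]
    rw [hα2, div_eq_mul_inv, mul_inv, inv_inv, div_eq_mul_inv]
    ring
end
end

section
/- For each nonnegative integer n, the map 𝒵_n(Λ, z) = Φ_n(Λ)·z + Ψ_n(Λ)·ζ(Λ, z), where Φ_n and Ψ_n are the coefficients in the expansion of ℘ⁿ and ζ is the Weierstrass zeta function, is an elliptic zeta function of weight −2n+1: it is quasi-periodic with quasi-period map H_n(ω) = Φ_n(Λ)·ω + Ψ_n(Λ)·η_Λ(ω), it satisfies 𝒵_n(αΛ, αz) = α^{−2n+1}𝒵_n(Λ, z) for all α ∈ ℂ*, and for Λ_τ = ℤ + τℤ the quasi-periods H_n(1) and H_n(τ) are meromorphic functions of τ ∈ ℍ. -/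
open Complex

noncomputable section

/-- The Eisenstein series `g₂(Λ) = 60 Σ_{ω ∈ Λ, ω ≠ 0} ω⁻⁴`. -/
def g2fun (Λ : Set ℂ) : ℂ := 60 * ∑' w : {w : ℂ // w ∈ Λ ∧ w ≠ 0}, (w.1 ^ 4)⁻¹

/-- The Eisenstein series `g₃(Λ) = 140 Σ_{ω ∈ Λ, ω ≠ 0} ω⁻⁶`. -/
def g3fun (Λ : Set ℂ) : ℂ := 140 * ∑' w : {w : ℂ // w ∈ Λ ∧ w ≠ 0}, (w.1 ^ 6)⁻¹

/-- The three-term recurrence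
`u_{n+1} = ((2n-1)/(4(2n+1))) g₂ u_{n-1} + ((n-1)/(2(2n+1))) g₃ u_{n-2}`. -/
def SatisfiesRec (Λ : Set ℂ) (u : ℤ → ℂ) : Prop :=
  ∀ n : ℤ, 1 ≤ n →
    u (n + 1) = (2 * (n : ℂ) - 1) / (4 * (2 * (n : ℂ) + 1)) * g2fun Λ * u (n - 1)
      + ((n : ℂ) - 1) / (2 * (2 * (n : ℂ) + 1)) * g3fun Λ * u (n - 2)

namespace ZnAux

/-- scaling equivalence on nonzero lattice points -/
def scaleEquiv (Λ : Set ℂ) {α : ℂ} (hα : α ≠ 0) :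
    {w : ℂ // w ∈ Λ ∧ w ≠ 0} ≃ {w : ℂ // w ∈ (fun w => α * w) '' Λ ∧ w ≠ 0} where
  toFun w := ⟨α * w.1, ⟨w.1, w.2.1, rfl⟩, mul_ne_zero hα w.2.2⟩
  invFun w := ⟨α⁻¹ * w.1, by
    obtain ⟨u, hu, he⟩ := w.2.1
    have : α⁻¹ * w.1 = u := by rw [← he]; field_simp
    rw [this]; exact hu, mul_ne_zero (inv_ne_zero hα) w.2.2⟩
  left_inv w := by ext; field_simp
  right_inv w := by ext; field_simp

@[simp] lemma scaleEquiv_apply (Λ : Set ℂ) {α : ℂ} (hα : α ≠ 0) (w : {w : ℂ // w ∈ Λ ∧ w ≠ 0}) :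
    ((scaleEquiv Λ hα) w).1 = α * w.1 := rfl

lemma g2fun_scale (Λ : Set ℂ) {α : ℂ} (hα : α ≠ 0) :
    g2fun ((fun w => α * w) '' Λ) = (α ^ 4)⁻¹ * g2fun Λ := by
  rw [g2fun, g2fun, ← Equiv.tsum_eq (scaleEquiv Λ hα)]
  simp only [scaleEquiv_apply]
  have : ∀ w : ℂ, ((α * w) ^ 4)⁻¹ = (α ^ 4)⁻¹ * (w ^ 4)⁻¹ := by
    intro w; rw [mul_pow, mul_inv]
  simp_rw [this, tsum_mul_left]; ring

lemma g3fun_scale (Λ : Set ℂ) {α : ℂ} (hα : α ≠ 0) :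
    g3fun ((fun w => α * w) '' Λ) = (α ^ 6)⁻¹ * g3fun Λ := by
  rw [g3fun, g3fun, ← Equiv.tsum_eq (scaleEquiv Λ hα)]
  simp only [scaleEquiv_apply]
  have : ∀ w : ℂ, ((α * w) ^ 6)⁻¹ = (α ^ 6)⁻¹ * (w ^ 6)⁻¹ := by
    intro w; rw [mul_pow, mul_inv]
  simp_rw [this, tsum_mul_left]; ring

lemma wzeta_scale (Λ : Set ℂ) {α : ℂ} (hα : α ≠ 0) (z : ℂ) :
    wzeta ((fun w => α * w) '' Λ) (α * z) = α⁻¹ * wzeta Λ z := by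
  rw [wzeta, wzeta, ← Equiv.tsum_eq (scaleEquiv Λ hα)]
  simp only [scaleEquiv_apply]
  have h1 : ∀ w : ℂ, (α * z - α * w)⁻¹ + (α * w)⁻¹ + (α * z) / (α * w) ^ 2
      = α⁻¹ * ((z - w)⁻¹ + w⁻¹ + z / w ^ 2) := by
    intro w
    have h2 : α * α⁻¹ ^ 2 = α⁻¹ := by rw [sq, ← mul_assoc, mul_inv_cancel₀ hα, one_mul]
    rw [show α * z - α * w = α * (z - w) by ring, mul_inv, mul_inv, mul_pow,
      div_eq_mul_inv, div_eq_mul_inv, mul_inv]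
    linear_combination (z * (w⁻¹ ^ 2)) * h2
  simp_rw [h1, tsum_mul_left, mul_inv, mul_add]

lemma wzeta_zero (Λ : Set ℂ) : wzeta Λ 0 = 0 := by
  rw [wzeta]
  have : ∀ w : {w : ℂ // w ∈ Λ ∧ w ≠ 0}, ((0:ℂ) - w.1)⁻¹ + (w.1)⁻¹ + (0:ℂ) / w.1 ^ 2 = 0 := by
    intro w; rw [zero_sub, zero_div, inv_neg]; ring
  simp_rw [this, tsum_zero, inv_zero, add_zero]

/-- negation equivalence -/
def negEquiv (Λ : Set ℂ) (hΛ : ∀ w ∈ Λ, -w ∈ Λ) :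
    {w : ℂ // w ∈ Λ ∧ w ≠ 0} ≃ {w : ℂ // w ∈ Λ ∧ w ≠ 0} where
  toFun w := ⟨-w.1, hΛ _ w.2.1, neg_ne_zero.2 w.2.2⟩
  invFun w := ⟨-w.1, hΛ _ w.2.1, neg_ne_zero.2 w.2.2⟩
  left_inv w := by ext; simp
  right_inv w := by ext; simp

lemma wzeta_neg (Λ : Set ℂ) (hΛ : ∀ w ∈ Λ, -w ∈ Λ) (z : ℂ) :
    wzeta Λ (-z) = - wzeta Λ z := by
  rw [wzeta, wzeta]
  rw [← (negEquiv Λ hΛ).tsum_eq (fun w : {w : ℂ // w ∈ Λ ∧ w ≠ 0} =>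
    ((-z : ℂ) - w.1)⁻¹ + (w.1)⁻¹ + (-z) / w.1 ^ 2)]
  have h1 : ∀ w : {w : ℂ // w ∈ Λ ∧ w ≠ 0},
      ((-z : ℂ) - ((negEquiv Λ hΛ) w).1)⁻¹ + (((negEquiv Λ hΛ) w).1)⁻¹
        + (-z) / ((negEquiv Λ hΛ) w).1 ^ 2
      = -(((z : ℂ) - w.1)⁻¹ + (w.1)⁻¹ + z / w.1 ^ 2) := by
    intro w
    show (-z - -w.1)⁻¹ + (-w.1)⁻¹ + (-z) / (-w.1) ^ 2 = _
    rw [show -z - -w.1 = -(z - w.1) by ring, inv_neg, inv_neg, neg_pow, neg_div]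
    ring
  simp_rw [h1, tsum_neg, inv_neg]; ring

def UHP : Set ℂ := {τ : ℂ | 0 < τ.im}

lemma isOpen_UHP : IsOpen UHP := isOpen_lt continuous_const Complex.continuous_im

lemma latticeSet_neg {ω₁ ω₂ : ℂ} : ∀ w ∈ latticeSet ω₁ ω₂, -w ∈ latticeSet ω₁ ω₂ := by
  rintro w ⟨m, n, rfl⟩
  exact ⟨-m, -n, by push_cast; ring⟩

lemma lattice_neg_mem {Λ : Set ℂ} (h : IsLattice Λ) : ∀ w ∈ Λ, -w ∈ Λ := by
  obtain ⟨ω₁, ω₂, -, rfl⟩ := h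
  exact latticeSet_neg

lemma eta_eq {Λ : Set ℂ} {η' : ℂ → ℂ} (hL : IsLattice Λ) (hq : IsQuasiPeriod Λ η')
    {ω : ℂ} (hω : ω ∈ Λ) : η' ω = wzeta Λ ω := by
  have h := hq ω hω (-ω)
  rw [neg_add_cancel, wzeta_zero, wzeta_neg Λ (lattice_neg_mem hL)] at h
  linear_combination -h

lemma image_latticeSet (α ω₁ ω₂ : ℂ) :
    (fun w => α * w) '' latticeSet ω₁ ω₂ = latticeSet (α * ω₁) (α * ω₂) := by
  ext z
  constructor
  · rintro ⟨w, ⟨m, n, rfl⟩, rfl⟩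
    exact ⟨m, n, by push_cast; ring⟩
  · rintro ⟨m, n, rfl⟩
    exact ⟨(m : ℂ) * ω₁ + (n : ℂ) * ω₂, ⟨m, n, rfl⟩, by push_cast; ring⟩

lemma isLattice_image {Λ : Set ℂ} (h : IsLattice Λ) {α : ℂ} (hα : α ≠ 0) :
    IsLattice ((fun w => α * w) '' Λ) := by
  obtain ⟨ω₁, ω₂, him, rfl⟩ := h
  refine ⟨α * ω₁, α * ω₂, ?_, image_latticeSet α ω₁ ω₂⟩
  rwa [mul_div_mul_left ω₂ ω₁ hα]

/-- recurrence coefficients -/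
def C1 (n : ℤ) : ℂ := (2 * (n : ℂ) - 1) / (4 * (2 * (n : ℂ) + 1))
def C2 (n : ℤ) : ℂ := ((n : ℂ) - 1) / (2 * (2 * (n : ℂ) + 1))

lemma rec_eq {Λ : Set ℂ} {u : ℤ → ℂ} (h : SatisfiesRec Λ u) (n : ℤ) (hn : 1 ≤ n) :
    u (n + 1) = C1 n * g2fun Λ * u (n - 1) + C2 n * g3fun Λ * u (n - 2) := h n hn

/-- homogeneity by induction on the recurrence -/
lemma hom_rec (u : Set ℂ → ℤ → ℂ) (hrec : ∀ Λ : Set ℂ, IsLattice Λ → SatisfiesRec Λ (u Λ))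
    (Λ : Set ℂ) (hL : IsLattice Λ) {α : ℂ} (hα : α ≠ 0) (c : ℤ)
    (hm1 : u ((fun w => α * w) '' Λ) (-1) = α ^ (-2 * (-1 : ℤ) + c) * u Λ (-1))
    (h0 : u ((fun w => α * w) '' Λ) 0 = α ^ (-2 * 0 + c) * u Λ 0)
    (h1 : u ((fun w => α * w) '' Λ) 1 = α ^ (-2 * 1 + c) * u Λ 1) :
    ∀ m : ℕ, u ((fun w => α * w) '' Λ) ((m : ℤ) - 1)
      = α ^ (-2 * ((m : ℤ) - 1) + c) * u Λ ((m : ℤ) - 1) := by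
  intro m
  induction m using Nat.strong_induction_on with
  | _ m ih =>
    match m with
    | 0 => simpa using hm1
    | 1 => simpa using h0
    | 2 => simpa using h1
    | (k + 3) =>
      have hn : (1 : ℤ) ≤ (k : ℤ) + 1 := by omega
      have hΛ := rec_eq (hrec Λ hL) ((k : ℤ) + 1) hn
      have hΛ' := rec_eq (hrec _ (isLattice_image hL hα)) ((k : ℤ) + 1) hn
      have e2 : ((k : ℤ) + 1 - 1) = ((k + 1 : ℕ) : ℤ) - 1 := by push_cast; ring
      have e3 : ((k : ℤ) + 1 - 2) = ((k : ℕ) : ℤ) - 1 := by push_cast; ring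
      rw [e2, e3] at hΛ hΛ'
      rw [ih (k + 1) (by omega), ih k (by omega), g2fun_scale Λ hα, g3fun_scale Λ hα] at hΛ'
      have e1 : ((k + 3 : ℕ) : ℤ) - 1 = ((k : ℤ) + 1) + 1 := by push_cast; ring
      rw [e1, hΛ', hΛ]
      have h4 : (α ^ 4)⁻¹ * α ^ (-2 * (((k + 1 : ℕ) : ℤ) - 1) + c)
          = α ^ (-2 * (((k : ℤ) + 1) + 1) + c) := by
        rw [← zpow_natCast α 4, ← zpow_neg, ← zpow_add₀ hα]
        congr 1; push_cast; ring
      have h6 : (α ^ 6)⁻¹ * α ^ (-2 * (((k : ℕ) : ℤ) - 1) + c)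
          = α ^ (-2 * (((k : ℤ) + 1) + 1) + c) := by
        rw [← zpow_natCast α 6, ← zpow_neg, ← zpow_add₀ hα]
        congr 1; push_cast; ring
      linear_combination (C1 ((k : ℤ) + 1) * g2fun Λ * u Λ (((k + 1 : ℕ) : ℤ) - 1)) * h4
        + (C2 ((k : ℤ) + 1) * g3fun Λ * u Λ (((k : ℕ) : ℤ) - 1)) * h6

lemma meroOn_mul {f g : ℂ → ℂ} {U : Set ℂ} (hf : MeromorphicOn f U) (hg : MeromorphicOn g U) :
    MeromorphicOn (fun z => f z * g z) U := fun x hx => (hf x hx).mul (hg x hx)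

lemma meroOn_add {f g : ℂ → ℂ} {U : Set ℂ} (hf : MeromorphicOn f U) (hg : MeromorphicOn g U) :
    MeromorphicOn (fun z => f z + g z) U := fun x hx => (hf x hx).add (hg x hx)

lemma meroOn_congr {f g : ℂ → ℂ} (hf : MeromorphicOn f UHP)
    (h : ∀ τ ∈ UHP, f τ = g τ) : MeromorphicOn g UHP :=
  hf.congr (fun τ hτ => h τ hτ) isOpen_UHP

lemma lat_isLattice {τ : ℂ} (hτ : τ ∈ UHP) : IsLattice (latticeSet 1 τ) :=
  ⟨1, τ, by rw [div_one]; exact hτ, rfl⟩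

/-- meromorphy of the coefficients by induction on the recurrence -/
lemma mero_rec (u : Set ℂ → ℤ → ℂ) (hrec : ∀ Λ : Set ℂ, IsLattice Λ → SatisfiesRec Λ (u Λ))
    (a b c : ℂ)
    (hbase : ∀ Λ : Set ℂ, IsLattice Λ → u Λ (-1) = a ∧ u Λ 0 = b ∧ u Λ 1 = c)
    (hg2 : MeromorphicOn (fun τ => g2fun (latticeSet 1 τ)) UHP)
    (hg3 : MeromorphicOn (fun τ => g3fun (latticeSet 1 τ)) UHP) :
    ∀ m : ℕ, MeromorphicOn (fun τ => u (latticeSet 1 τ) ((m : ℤ) - 1)) UHP := by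
  intro m
  induction m using Nat.strong_induction_on with
  | _ m ih =>
    match m with
    | 0 => exact meroOn_congr (MeromorphicOn.const a) (fun τ hτ => by
        simpa using ((hbase _ (lat_isLattice hτ)).1).symm)
    | 1 => exact meroOn_congr (MeromorphicOn.const b) (fun τ hτ => by
        simpa using ((hbase _ (lat_isLattice hτ)).2.1).symm)
    | 2 => exact meroOn_congr (MeromorphicOn.const c) (fun τ hτ => by
        simpa using ((hbase _ (lat_isLattice hτ)).2.2).symm)
    | (k + 3) =>
      refine meroOn_congr (f := fun τ =>
        C1 ((k : ℤ) + 1) * g2fun (latticeSet 1 τ) * u (latticeSet 1 τ) (((k + 1 : ℕ) : ℤ) - 1)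
        + C2 ((k : ℤ) + 1) * g3fun (latticeSet 1 τ) * u (latticeSet 1 τ) (((k : ℕ) : ℤ) - 1))
        ?_ ?_
      · exact meroOn_add
          (meroOn_mul (meroOn_mul (MeromorphicOn.const _) hg2) (ih (k + 1) (by omega)))
          (meroOn_mul (meroOn_mul (MeromorphicOn.const _) hg3) (ih k (by omega)))
      · intro τ hτ
        have hΛ := rec_eq (hrec _ (lat_isLattice hτ)) ((k : ℤ) + 1) (by omega)
        have e1 : ((k + 3 : ℕ) : ℤ) - 1 = ((k : ℤ) + 1) + 1 := by push_cast; ring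
        have e2 : ((k : ℤ) + 1 - 1) = ((k + 1 : ℕ) : ℤ) - 1 := by push_cast; ring
        have e3 : ((k : ℤ) + 1 - 2) = ((k : ℕ) : ℤ) - 1 := by push_cast; ring
        rw [e2, e3] at hΛ
        rw [e1, hΛ]

open EisensteinSeries in
lemma dummy_check : True := trivial

def L (x : Fin 2 → ℤ) (τ : ℂ) : ℂ := (x 0 : ℂ) * τ + (x 1 : ℂ)

lemma L_sub (x y : Fin 2 → ℤ) (τ : ℂ) : L (x - y) τ = L x τ - L y τ := by
  simp only [L, Pi.sub_apply]; push_cast; ring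

lemma L_ne_zero {τ : ℂ} (hτ : τ ∈ UHP) {x : Fin 2 → ℤ} (hx : x ≠ 0) : L x τ ≠ 0 := by
  have himτ : 0 < τ.im := hτ
  intro h
  have him : (L x τ).im = (x 0 : ℝ) * τ.im := by
    simp [L, Complex.add_im, Complex.mul_im]
  have h0 : (x 0 : ℝ) * τ.im = 0 := by rw [← him, h]; simp
  have hx0 : x 0 = 0 := by
    rcases mul_eq_zero.1 h0 with h1 | h2
    · exact_mod_cast h1
    · exact absurd h2 (ne_of_gt himτ)
  have hx1 : x 1 = 0 := by
    have : L x τ = (x 1 : ℂ) := by simp [L, hx0]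
    rw [h] at this
    exact_mod_cast this.symm
  apply hx
  funext i
  fin_cases i <;> simp [hx0, hx1]

lemma L_inj {τ : ℂ} (hτ : τ ∈ UHP) {x y : Fin 2 → ℤ} (h : L x τ = L y τ) : x = y := by
  by_contra hne
  exact L_ne_zero hτ (sub_ne_zero.2 hne) (by rw [L_sub, h, sub_self])

lemma L_mem (x : Fin 2 → ℤ) (τ : ℂ) : L x τ ∈ latticeSet 1 τ :=
  ⟨x 1, x 0, by rw [L]; push_cast; ring⟩

/-- the lattice `ℤ + τℤ` indexed by integer vectors -/
def latEquiv {τ : ℂ} (hτ : τ ∈ UHP) :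
    {x : Fin 2 → ℤ // x ≠ 0} ≃ {w : ℂ // w ∈ latticeSet 1 τ ∧ w ≠ 0} :=
  Equiv.ofBijective (fun x => ⟨L x.1 τ, L_mem x.1 τ, L_ne_zero hτ x.2⟩) (by
    constructor
    · intro x y h
      exact Subtype.ext (L_inj hτ (by simpa using congrArg Subtype.val h))
    · rintro ⟨w, ⟨m, n, rfl⟩, hne⟩
      refine ⟨⟨![n, m], ?_⟩, ?_⟩
      · intro h0
        apply hne
        have h1 : (![n, m] : Fin 2 → ℤ) 0 = 0 := by rw [h0]; rfl
        have h2 : (![n, m] : Fin 2 → ℤ) 1 = 0 := by rw [h0]; rfl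
        simp only [Matrix.cons_val_zero, Matrix.cons_val_one, Matrix.head_cons] at h1 h2
        simp [h1, h2]
      · apply Subtype.ext
        show L ![n, m] τ = _
        simp [L]; ring)

@[simp] lemma latEquiv_apply {τ : ℂ} (hτ : τ ∈ UHP) (x : {x : Fin 2 → ℤ // x ≠ 0}) :
    ((latEquiv hτ) x).1 = L x.1 τ := rfl

lemma tsum_lat {τ : ℂ} (hτ : τ ∈ UHP) (f : ℂ → ℂ) :
    ∑' w : {w : ℂ // w ∈ latticeSet 1 τ ∧ w ≠ 0}, f w.1
      = ∑' x : {x : Fin 2 → ℤ // x ≠ 0}, f (L x.1 τ) :=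
  ((latEquiv hτ).tsum_eq (fun w => f w.1)).symm

lemma finite_small (R : ℝ) : {x : Fin 2 → ℤ | ‖x‖ ≤ R}.Finite := by
  apply Set.Finite.subset (Set.Finite.pi (fun _ : Fin 2 => Set.finite_Icc (-⌈R⌉) ⌈R⌉))
  intro x hx
  intro i _
  have h1 : ‖x i‖ ≤ ‖x‖ := norm_le_pi_norm x i
  have h2 : |(x i : ℝ)| ≤ (⌈R⌉ : ℝ) := by
    rw [← Int.norm_eq_abs]
    exact h1.trans (hx.trans (Int.le_ceil R))
  rw [← Int.cast_abs] at h2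
  have h3 : |x i| ≤ ⌈R⌉ := by exact_mod_cast h2
  simp only [Set.mem_Icc]
  exact abs_le.1 h3

lemma norm_ge_one {x : Fin 2 → ℤ} (hx : x ≠ 0) : 1 ≤ ‖x‖ := by
  rcases Function.ne_iff.1 hx with ⟨i, hi⟩
  have h1 : ‖x i‖ ≤ ‖x‖ := norm_le_pi_norm x i
  have : (1 : ℝ) ≤ ‖x i‖ := by
    rw [Int.norm_eq_abs]
    exact_mod_cast Int.one_le_abs (by simpa using hi)
  linarith

lemma r_bound {B M : ℝ} (hB : 0 < B) {z : ℂ} (him : B ≤ z.im) (hre : |z.re| ≤ M)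
    {x : Fin 2 → ℤ} (hx : x ≠ 0) :
    EisensteinSeries.r ⟨⟨M, B⟩, hB⟩ * ‖x‖ ≤ ‖L x z‖ := by
  have hz' : 0 < z.im := lt_of_lt_of_le hB him
  have h1 := EisensteinSeries.r_mul_max_le ⟨z, hz'⟩ hx
  have h2 : EisensteinSeries.r ⟨⟨M, B⟩, hB⟩ ≤ EisensteinSeries.r ⟨z, hz'⟩ :=
    EisensteinSeries.r_lower_bound_on_verticalStrip ⟨z, hz'⟩ hB ⟨hre, him⟩
  exact le_trans (mul_le_mul_of_nonneg_right h2 (norm_nonneg x)) h1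

lemma compact_bound {K : Set ℂ} (hK : IsCompact K) (hKU : K ⊆ UHP) :
    ∃ (B M : ℝ), 0 < B ∧ 1 ≤ M ∧ ∀ z ∈ K, B ≤ z.im ∧ ‖z‖ ≤ M ∧ |z.re| ≤ M := by
  rcases K.eq_empty_or_nonempty with rfl | hne
  · exact ⟨1, 1, one_pos, le_refl 1, by simp⟩
  obtain ⟨v, hvK, hv⟩ := hK.exists_isMinOn hne Complex.continuous_im.continuousOn
  obtain ⟨u, huK, hu⟩ := hK.exists_isMaxOn hne continuous_norm.continuousOn
  refine ⟨v.im, max (‖u‖) 1, hKU hvK, le_max_right _ _, fun z hz => ?_⟩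
  have h1 : z.im ≥ v.im := isMinOn_iff.mp hv _ hz
  have h2 : ‖z‖ ≤ ‖u‖ := isMaxOn_iff.mp hu _ hz
  refine ⟨h1, h2.trans (le_max_left _ _), ?_⟩
  exact (Complex.abs_re_le_norm z).trans (h2.trans (le_max_left _ _))

lemma summable_inv_pow (k : ℕ) (hk : 3 ≤ k) (c : ℝ) :
    Summable (fun x : {x : Fin 2 → ℤ // x ≠ 0} => c * (‖x.1‖ ^ k)⁻¹) := by
  have h0 : Summable (fun x : {x : Fin 2 → ℤ // x ≠ 0} => ‖x.1‖ ^ (-(k:ℝ))) :=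
    (EisensteinSeries.summable_one_div_norm_rpow (by norm_num; omega)).subtype _
  refine (h0.congr fun x => ?_).mul_left c
  rw [Real.rpow_neg (norm_nonneg _), Real.rpow_natCast]

/-- differentiability of a series of functions on the upper half plane -/
lemma diffOn_tsum {ι : Type*} (F : ι → ℂ → ℂ) (hF : ∀ i, DifferentiableOn ℂ (F i) UHP)
    (hb : ∀ K : Set ℂ, K ⊆ UHP → IsCompact K → ∃ u : ι → ℝ, Summable u ∧
      ∀ᶠ i in Filter.cofinite, ∀ x ∈ K, ‖F i x‖ ≤ u i) :
    DifferentiableOn ℂ (fun τ => ∑' i, F i τ) UHP := by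
  have h1 : TendstoLocallyUniformlyOn (fun (t : Finset ι) x => ∑ i ∈ t, F i x)
      (fun τ => ∑' i, F i τ) Filter.atTop UHP := by
    rw [tendstoLocallyUniformlyOn_iff_forall_isCompact isOpen_UHP]
    intro K hKU hK
    obtain ⟨u, hu, hub⟩ := hb K hKU hK
    exact tendstoUniformlyOn_tsum_of_cofinite_eventually hu hub
  exact h1.differentiableOn (Filter.Eventually.of_forall fun t =>
    DifferentiableOn.fun_sum fun i _ => hF i) isOpen_UHP

lemma diffOn_L {x : Fin 2 → ℤ} : Differentiable ℂ (fun τ : ℂ => L x τ) :=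
  (differentiable_id.const_mul _).add_const _

lemma diffOn_eis (k : ℕ) (hk : 3 ≤ k) :
    DifferentiableOn ℂ (fun τ => ∑' x : {x : Fin 2 → ℤ // x ≠ 0}, ((L x.1 τ) ^ k)⁻¹) UHP := by
  apply diffOn_tsum
  · intro x
    exact DifferentiableOn.inv (diffOn_L.differentiableOn.pow k)
      (fun τ hτ => pow_ne_zero _ (L_ne_zero hτ x.2))
  · intro K hKU hK
    obtain ⟨B, M, hB, hM, hKb⟩ := compact_bound hK hKU
    set r0 := EisensteinSeries.r ⟨⟨M, B⟩, hB⟩ with hr0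
    have hr0p : 0 < r0 := EisensteinSeries.r_pos _
    refine ⟨fun x => (r0 ^ k)⁻¹ * (‖x.1‖ ^ k)⁻¹, ?_, Filter.Eventually.of_forall fun x z hz => ?_⟩
    · have := summable_inv_pow k hk (r0 ^ k)⁻¹
      exact this
    · obtain ⟨him, habs, hre⟩ := hKb z hz
      have hb := r_bound hB him hre x.2
      have hx1 : (0:ℝ) < ‖x.1‖ := lt_of_lt_of_le one_pos (norm_ge_one x.2)
      have hpos : (0:ℝ) < (r0 * ‖x.1‖) ^ k := pow_pos (mul_pos hr0p hx1) k
      show ‖((L x.1 z) ^ k)⁻¹‖ ≤ (r0 ^ k)⁻¹ * (‖x.1‖ ^ k)⁻¹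
      rw [norm_inv, norm_pow, ← mul_inv, ← mul_pow]
      exact inv_anti₀ hpos (pow_le_pow_left₀ (le_of_lt (mul_pos hr0p hx1)) hb k)

lemma diffOn_zeta (e : Fin 2 → ℤ) (he : e ≠ 0) (he1 : ‖e‖ ≤ 1)
    (heb : ∀ τ : ℂ, ‖L e τ‖ ≤ max 1 (‖τ‖)) :
    DifferentiableOn ℂ (fun τ => ∑' x : {x : Fin 2 → ℤ // x ≠ 0},
      ((L e τ - L x.1 τ)⁻¹ + (L x.1 τ)⁻¹ + L e τ / (L x.1 τ) ^ 2)) UHP := by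
  apply diffOn_tsum
  · intro x
    have hx2 : DifferentiableOn ℂ (fun τ => (L x.1 τ)⁻¹) UHP :=
      DifferentiableOn.inv diffOn_L.differentiableOn (fun τ hτ => L_ne_zero hτ x.2)
    have hx3 : DifferentiableOn ℂ (fun τ => L e τ / (L x.1 τ) ^ 2) UHP :=
      DifferentiableOn.div diffOn_L.differentiableOn (diffOn_L.differentiableOn.pow 2)
        (fun τ hτ => pow_ne_zero _ (L_ne_zero hτ x.2))
    by_cases hxe : x.1 = e
    · subst hxe
      simp only [sub_self, inv_zero, zero_add]
      exact hx2.add hx3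
    · have hx1 : DifferentiableOn ℂ (fun τ => (L e τ - L x.1 τ)⁻¹) UHP := by
        refine DifferentiableOn.inv
          (diffOn_L.differentiableOn.sub diffOn_L.differentiableOn) (fun τ hτ => ?_)
        rw [← L_sub]
        exact L_ne_zero hτ (sub_ne_zero.2 (Ne.symm hxe))
      exact (hx1.add hx2).add hx3
  · intro K hKU hK
    obtain ⟨B, M, hB, hM, hKb⟩ := compact_bound hK hKU
    set r0 := EisensteinSeries.r ⟨⟨M, B⟩, hB⟩ with hr0
    have hr0p : 0 < r0 := EisensteinSeries.r_pos _
    refine ⟨fun x => (2 * M ^ 2 / r0 ^ 3) * (‖x.1‖ ^ 3)⁻¹, summable_inv_pow 3 le_rfl _, ?_⟩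
    rw [Filter.eventually_cofinite]
    apply Set.Finite.subset (Set.Finite.preimage
      (Set.injOn_of_injective Subtype.val_injective) (finite_small 2))
    intro x hx
    simp only [Set.mem_preimage, Set.mem_setOf_eq]
    by_contra hbig
    push_neg at hbig
    apply hx
    -- now the actual estimate, for 2 ≤ ‖x.1‖
    intro z hz
    show ‖(L e z - L x.1 z)⁻¹ + (L x.1 z)⁻¹ + L e z / (L x.1 z) ^ 2‖
      ≤ 2 * M ^ 2 / r0 ^ 3 * (‖x.1‖ ^ 3)⁻¹
    obtain ⟨him, habs, hre⟩ := hKb z hz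
    have hb2 : (2:ℝ) ≤ ‖x.1‖ := le_of_lt hbig
    have hzU : z ∈ UHP := hKU hz
    set a := L e z
    set w := L x.1 z
    have hw : r0 * ‖x.1‖ ≤ ‖w‖ := r_bound hB him hre x.2
    have hxe : x.1 ≠ e := by
      intro h
      rw [h] at hb2
      linarith
    have hex : e - x.1 ≠ 0 := sub_ne_zero.2 (fun h => hxe h.symm)
    have hnex : ‖x.1‖ - 1 ≤ ‖e - x.1‖ := by
      have h1 : ‖x.1‖ - ‖e‖ ≤ ‖x.1 - e‖ := norm_sub_norm_le _ _
      rw [norm_sub_rev] at h1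
      linarith
    have haw : r0 * (‖x.1‖ - 1) ≤ ‖a - w‖ := by
      have h1 : r0 * ‖e - x.1‖ ≤ ‖L (e - x.1) z‖ := r_bound hB him hre hex
      rw [L_sub] at h1
      calc r0 * (‖x.1‖ - 1) ≤ r0 * ‖e - x.1‖ := by
            apply mul_le_mul_of_nonneg_left hnex (le_of_lt hr0p)
        _ ≤ _ := h1
    have ha : ‖a‖ ≤ M := by
      calc ‖a‖ ≤ max 1 (‖z‖) := heb z
        _ ≤ M := max_le hM habs
    have hwne : w ≠ 0 := L_ne_zero hzU x.2
    have hawne : a - w ≠ 0 := by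
      intro h
      rw [h] at haw
      simp only [norm_zero] at haw
      nlinarith
    have heq : (a - w)⁻¹ + w⁻¹ + a / w ^ 2 = a ^ 2 / (w ^ 2 * (a - w)) := by
      field_simp
      ring
    rw [heq]
    have hnorm : ‖a ^ 2 / (w ^ 2 * (a - w))‖
        = (‖a‖) ^ 2 / ((‖w‖) ^ 2 * ‖a - w‖) := by
      rw [norm_div, norm_mul, norm_pow, norm_pow]
    rw [hnorm]
    have hx1 : (0:ℝ) < ‖x.1‖ := by linarith
    have hhalf : ‖x.1‖ / 2 ≤ ‖x.1‖ - 1 := by linarith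
    have hd1 : (0:ℝ) < (r0 * ‖x.1‖) ^ 2 * (r0 * (‖x.1‖ / 2)) := by positivity
    have hstep : (‖a‖) ^ 2 / ((‖w‖) ^ 2 * ‖a - w‖)
        ≤ M ^ 2 / ((r0 * ‖x.1‖) ^ 2 * (r0 * (‖x.1‖ / 2))) := by
      have h1 : (‖a‖) ^ 2 ≤ M ^ 2 := pow_le_pow_left₀ (norm_nonneg a) ha 2
      have h2 : (r0 * ‖x.1‖) ^ 2 ≤ (‖w‖) ^ 2 :=
        pow_le_pow_left₀ (by positivity) hw 2
      have h3 : r0 * (‖x.1‖ / 2) ≤ ‖a - w‖ :=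
        le_trans (mul_le_mul_of_nonneg_left hhalf hr0p.le) haw
      exact div_le_div₀ (by positivity) h1 hd1
        (mul_le_mul h2 h3 (by positivity) (by positivity))
    refine hstep.trans (le_of_eq ?_)
    have hxne : ‖x.1‖ ≠ 0 := ne_of_gt hx1
    field_simp

lemma meroOn_of_diffOn {f : ℂ → ℂ} (h : DifferentiableOn ℂ f UHP) : MeromorphicOn f UHP :=
  fun x hx => ((h.analyticAt (isOpen_UHP.mem_nhds hx)).meromorphicAt)

lemma g2_eq {τ : ℂ} (hτ : τ ∈ UHP) :
    g2fun (latticeSet 1 τ) = 60 * ∑' x : {x : Fin 2 → ℤ // x ≠ 0}, ((L x.1 τ) ^ 4)⁻¹ := by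
  rw [g2fun, ← Equiv.tsum_eq (latEquiv hτ)]
  simp only [latEquiv_apply]

lemma g3_eq {τ : ℂ} (hτ : τ ∈ UHP) :
    g3fun (latticeSet 1 τ) = 140 * ∑' x : {x : Fin 2 → ℤ // x ≠ 0}, ((L x.1 τ) ^ 6)⁻¹ := by
  rw [g3fun, ← Equiv.tsum_eq (latEquiv hτ)]
  simp only [latEquiv_apply]

lemma mero_g2 : MeromorphicOn (fun τ => g2fun (latticeSet 1 τ)) UHP :=
  meroOn_congr (meroOn_of_diffOn ((diffOn_eis 4 (by norm_num)).const_mul 60))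
    (fun τ hτ => (g2_eq hτ).symm)

lemma mero_g3 : MeromorphicOn (fun τ => g3fun (latticeSet 1 τ)) UHP :=
  meroOn_congr (meroOn_of_diffOn ((diffOn_eis 6 (by norm_num)).const_mul 140))
    (fun τ hτ => (g3_eq hτ).symm)

lemma wzeta_lat {τ : ℂ} (hτ : τ ∈ UHP) (e : Fin 2 → ℤ) :
    wzeta (latticeSet 1 τ) (L e τ) = (L e τ)⁻¹ + ∑' x : {x : Fin 2 → ℤ // x ≠ 0},
      ((L e τ - L x.1 τ)⁻¹ + (L x.1 τ)⁻¹ + L e τ / (L x.1 τ) ^ 2) := by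
  rw [wzeta, ← Equiv.tsum_eq (latEquiv hτ)]
  simp only [latEquiv_apply]

lemma mero_wzE (e : Fin 2 → ℤ) (he : e ≠ 0) (he1 : ‖e‖ ≤ 1)
    (heb : ∀ τ : ℂ, ‖L e τ‖ ≤ max 1 (‖τ‖)) :
    MeromorphicOn (fun τ => wzeta (latticeSet 1 τ) (L e τ)) UHP := by
  have hd : DifferentiableOn ℂ (fun τ => (L e τ)⁻¹ + ∑' x : {x : Fin 2 → ℤ // x ≠ 0},
      ((L e τ - L x.1 τ)⁻¹ + (L x.1 τ)⁻¹ + L e τ / (L x.1 τ) ^ 2)) UHP :=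
    (DifferentiableOn.inv diffOn_L.differentiableOn (fun τ hτ => L_ne_zero hτ he)).add
      (diffOn_zeta e he he1 heb)
  exact meroOn_congr (meroOn_of_diffOn hd) (fun τ hτ => (wzeta_lat hτ e).symm)

def e1 : Fin 2 → ℤ := ![0, 1]
def eT : Fin 2 → ℤ := ![1, 0]

lemma L_e1 (τ : ℂ) : L e1 τ = 1 := by simp [L, e1]
lemma L_eT (τ : ℂ) : L eT τ = τ := by simp [L, eT]
lemma e1_ne : e1 ≠ 0 := by
  intro h; have := congrFun h 1; simp [e1] at this
lemma eT_ne : eT ≠ 0 := by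
  intro h; have := congrFun h 0; simp [eT] at this
lemma e1_norm : ‖e1‖ ≤ 1 := by
  rw [EisensteinSeries.norm_eq_max_natAbs]; simp [e1]
lemma eT_norm : ‖eT‖ ≤ 1 := by
  rw [EisensteinSeries.norm_eq_max_natAbs]; simp [eT]
lemma e1_bound : ∀ τ : ℂ, ‖L e1 τ‖ ≤ max 1 (‖τ‖) := by
  intro τ; rw [L_e1]; simp
lemma eT_bound : ∀ τ : ℂ, ‖L eT τ‖ ≤ max 1 (‖τ‖) := by
  intro τ; rw [L_eT]; exact le_max_right _ _

lemma mero_wz1 : MeromorphicOn (fun τ => wzeta (latticeSet 1 τ) 1) UHP :=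
  meroOn_congr (mero_wzE e1 e1_ne e1_norm e1_bound) (fun τ _ => by rw [L_e1])

lemma mero_wzT : MeromorphicOn (fun τ => wzeta (latticeSet 1 τ) τ) UHP :=
  meroOn_congr (mero_wzE eT eT_ne eT_norm eT_bound) (fun τ _ => by rw [L_eT])

lemma one_mem_lat (τ : ℂ) : (1:ℂ) ∈ latticeSet 1 τ := ⟨1, 0, by push_cast; ring⟩
lemma tau_mem_lat (τ : ℂ) : τ ∈ latticeSet 1 τ := ⟨0, 1, by push_cast; ring⟩

end ZnAux

open ZnAux

/-- for each nonnegative integer `n`, the map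
`𝒵_n(Λ, z) = Φ_n(Λ) z + Ψ_n(Λ) ζ(Λ, z)` is an elliptic zeta function of weight
`-2n + 1`: it is quasi-periodic with quasi-period map
`H_n(ω) = Φ_n(Λ) ω + Ψ_n(Λ) η_Λ(ω)`, homogeneous of weight `-2n + 1`, and the
quasi-periods `H_n(1)` and `H_n(τ)` are meromorphic functions of `τ ∈ ℍ`. -/
theorem zn_is_ellipticZeta
    (Φ Ψ : Set ℂ → ℤ → ℂ)
    (hΦrec : ∀ Λ : Set ℂ, IsLattice Λ → SatisfiesRec Λ (Φ Λ))
    (hΨrec : ∀ Λ : Set ℂ, IsLattice Λ → SatisfiesRec Λ (Ψ Λ))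
    (hinit : ∀ Λ : Set ℂ, IsLattice Λ →
      Φ Λ (-1) = 0 ∧ Φ Λ 0 = 1 ∧ Φ Λ 1 = 0 ∧ Ψ Λ (-1) = 0 ∧ Ψ Λ 0 = 0 ∧ Ψ Λ 1 = -1)
    (η : Set ℂ → ℂ → ℂ) (hη : ∀ Λ : Set ℂ, IsLattice Λ → IsQuasiPeriod Λ (η Λ))
    (n : ℕ) :
    (∀ Λ : Set ℂ, IsLattice Λ → ∀ ω ∈ Λ, ∀ z : ℂ,
      Φ Λ (n : ℤ) * (z + ω) + Ψ Λ (n : ℤ) * wzeta Λ (z + ω)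
        = (Φ Λ (n : ℤ) * z + Ψ Λ (n : ℤ) * wzeta Λ z)
          + (Φ Λ (n : ℤ) * ω + Ψ Λ (n : ℤ) * η Λ ω)) ∧
    (∀ Λ : Set ℂ, IsLattice Λ → ∀ α : ℂ, α ≠ 0 → ∀ z : ℂ,
      Φ ((fun w => α * w) '' Λ) (n : ℤ) * (α * z)
          + Ψ ((fun w => α * w) '' Λ) (n : ℤ) * wzeta ((fun w => α * w) '' Λ) (α * z)
        = α ^ (-2 * (n : ℤ) + 1) * (Φ Λ (n : ℤ) * z + Ψ Λ (n : ℤ) * wzeta Λ z)) ∧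
    MeromorphicOn
      (fun τ : ℂ => Φ (latticeSet 1 τ) (n : ℤ) * 1
        + Ψ (latticeSet 1 τ) (n : ℤ) * η (latticeSet 1 τ) 1) {τ : ℂ | 0 < τ.im} ∧
    MeromorphicOn
      (fun τ : ℂ => Φ (latticeSet 1 τ) (n : ℤ) * τ
        + Ψ (latticeSet 1 τ) (n : ℤ) * η (latticeSet 1 τ) τ) {τ : ℂ | 0 < τ.im} := by
  have en : ((n + 1 : ℕ) : ℤ) - 1 = (n : ℤ) := by push_cast; ring
  refine ⟨?_, ?_, ?_, ?_⟩
  · intro Λ hL ω hω z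
    rw [hη Λ hL ω hω z]; ring
  · intro Λ hL α hα z
    obtain ⟨hΦ1, hΦ2, hΦ3, hΨ1, hΨ2, hΨ3⟩ := hinit Λ hL
    obtain ⟨hΦ1', hΦ2', hΦ3', hΨ1', hΨ2', hΨ3'⟩ := hinit _ (isLattice_image hL hα)
    have hΦh := hom_rec Φ hΦrec Λ hL hα 0
      (by rw [hΦ1, hΦ1']; ring) (by rw [hΦ2, hΦ2']; simp)
      (by rw [hΦ3, hΦ3']; ring) (n + 1)
    have hΨh := hom_rec Ψ hΨrec Λ hL hα 2
      (by rw [hΨ1, hΨ1']; ring) (by rw [hΨ2, hΨ2']; ring)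
      (by rw [hΨ3, hΨ3']; simp) (n + 1)
    rw [en] at hΦh hΨh
    rw [hΦh, hΨh, wzeta_scale Λ hα z]
    have h1 : α ^ (-2 * (n : ℤ) + 0) * α = α ^ (-2 * (n : ℤ) + 1) := by
      rw [show (-2 * (n : ℤ) + 1) = (-2 * (n : ℤ) + 0) + 1 by ring, zpow_add_one₀ hα]
    have h2 : α ^ (-2 * (n : ℤ) + 2) * α⁻¹ = α ^ (-2 * (n : ℤ) + 1) := by
      rw [show (-2 * (n : ℤ) + 1) = (-2 * (n : ℤ) + 2) - 1 by ring, zpow_sub_one₀ hα]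
    linear_combination (Φ Λ (n : ℤ) * z) * h1 + (Ψ Λ (n : ℤ) * wzeta Λ z) * h2
  · have hΦm := mero_rec Φ hΦrec 0 1 0
      (fun Λ hL => ⟨(hinit Λ hL).1, (hinit Λ hL).2.1, (hinit Λ hL).2.2.1⟩)
      mero_g2 mero_g3 (n + 1)
    have hΨm := mero_rec Ψ hΨrec 0 0 (-1)
      (fun Λ hL => ⟨(hinit Λ hL).2.2.2.1, (hinit Λ hL).2.2.2.2.1, (hinit Λ hL).2.2.2.2.2⟩)
      mero_g2 mero_g3 (n + 1)
    simp only [en] at hΦm hΨm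
    refine meroOn_congr (meroOn_add (meroOn_mul hΦm (MeromorphicOn.const 1))
      (meroOn_mul hΨm mero_wz1)) (fun τ hτ => ?_)
    rw [eta_eq (lat_isLattice hτ) (hη _ (lat_isLattice hτ)) (one_mem_lat τ)]
  · have hΦm := mero_rec Φ hΦrec 0 1 0
      (fun Λ hL => ⟨(hinit Λ hL).1, (hinit Λ hL).2.1, (hinit Λ hL).2.2.1⟩)
      mero_g2 mero_g3 (n + 1)
    have hΨm := mero_rec Ψ hΨrec 0 0 (-1)
      (fun Λ hL => ⟨(hinit Λ hL).2.2.2.1, (hinit Λ hL).2.2.2.2.1, (hinit Λ hL).2.2.2.2.2⟩)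
      mero_g2 mero_g3 (n + 1)
    simp only [en] at hΦm hΨm
    refine meroOn_congr (meroOn_add (meroOn_mul hΦm MeromorphicOn.id)
      (meroOn_mul hΨm mero_wzT)) (fun τ hτ => ?_)
    rw [eta_eq (lat_isLattice hτ) (hη _ (lat_isLattice hτ)) (tau_mem_lat τ)]
    rfl
end
end
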